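/- Let f : ℤⁿ → {0,1} and let A be a deterministic stream automaton with post-processing g such that g(A(σ)) = f(freq σ) for all streams σ of length at most n + 2m + 2, where m bounds the support sizes of certain vectors. Suppose there exist x, y ∈ ℤⁿ each supported on at most m coordinates and streams with A(κ(x + r·e_i)) = A(κ(y + r'·e_i)) for integers r' < r. Then for all z ∈ ℤⁿ, f(z) = f(z + (y − x) + (r' − r)·e_i). (I.e., f is invariant under adding the difference vector of a colliding pair.) -/
import Mathlib


/-- The frequency vector of a stream: coordinatewise sum of updates. -/
def freq {n : ℕ} (σ : List (Fin n × ℤ)) : Fin n → ℤ :=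
  fun i => (σ.map fun u => if u.1 = i then u.2 else 0).sum

lemma freq_append {n : ℕ} (σ τ : List (Fin n × ℤ)) :
    freq (σ ++ τ) = freq σ + freq τ := by
  funext j; simp [freq]

lemma supp_add_single {n : ℕ} (x : Fin n → ℤ) (i : Fin n) (r : ℤ) :
    (Finset.univ.filter fun j : Fin n => (x + r • Pi.single i 1 : Fin n → ℤ) j ≠ 0).card ≤
      (Finset.univ.filter fun j => x j ≠ 0).card + 1 := by
  have hsub : (Finset.univ.filter fun j : Fin n => (x + r • Pi.single i 1 : Fin n → ℤ) j ≠ 0) ⊆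
      (Finset.univ.filter fun j => x j ≠ 0) ∪ {i} := by
    intro j hj
    simp only [Finset.mem_filter, Finset.mem_univ, true_and] at hj
    simp only [Finset.mem_union, Finset.mem_filter, Finset.mem_univ, true_and,
      Finset.mem_singleton]
    by_cases hji : j = i
    · exact Or.inr hji
    · left
      intro hx0
      apply hj
      simp [Pi.single_apply, hji, hx0]
  calc _ ≤ ((Finset.univ.filter fun j => x j ≠ 0) ∪ {i}).card := Finset.card_le_card hsub
    _ ≤ _ := by simpa using Finset.card_union_le _ {i}

/-- If a deterministic streaming algorithm `A` with post-processing `post` computes the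
total function `f` on all streams of length at most `n + 2m + 2`, and the canonical
streams of `x + r·e_i` and `y + r'·e_i` (with `x, y` supported on at most `m`
coordinates, `r' < r`) drive `A` to the same state, then `f` is invariant under adding
`(y - x) + (r' - r)·e_i`. -/
theorem statement14 {n m : ℕ} {Q : Type*}
    (A : List (Fin n × ℤ) → Q) (g : Q → List (Fin n × ℤ) → Q)
    (hg : ∀ σ τ, A (σ ++ τ) = g (A σ) τ)
    (f : (Fin n → ℤ) → Bool) (post : Q → Bool)
    (κ : (Fin n → ℤ) → List (Fin n × ℤ))
    (hκfreq : ∀ v, freq (κ v) = v)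
    (hκlen : ∀ v, (κ v).length = (Finset.univ.filter fun i => v i ≠ 0).card)
    (hcorrect : ∀ σ : List (Fin n × ℤ), σ.length ≤ n + 2 * m + 2 →
      post (A σ) = f (freq σ))
    (x y : Fin n → ℤ)
    (hx : (Finset.univ.filter fun i => x i ≠ 0).card ≤ m)
    (hy : (Finset.univ.filter fun i => y i ≠ 0).card ≤ m)
    (i : Fin n) (r r' : ℤ) (hrr : r' < r)
    (hcoll : A (κ (x + r • Pi.single i 1)) = A (κ (y + r' • Pi.single i 1))) :
    ∀ z : Fin n → ℤ, f z = f (z + (y - x) + (r' - r) • Pi.single i 1) := by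
  intro z
  have hnegu : -(x + r • Pi.single i (1:ℤ)) = (-x) + (-r) • Pi.single i (1:ℤ) := by
    funext j
    simp only [Pi.neg_apply, Pi.add_apply, Pi.smul_apply, smul_eq_mul]
    ring
  have hsx : (Finset.univ.filter fun j => (-x) j ≠ 0).card
      = (Finset.univ.filter fun j => x j ≠ 0).card := by
    congr 1; ext j; simp
  have hlu : (κ (x + r • Pi.single i 1)).length ≤ m + 1 := by
    rw [hκlen]
    refine le_trans (supp_add_single x i r) ?_
    omega
  have hlv : (κ (y + r' • Pi.single i 1)).length ≤ m + 1 := by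
    rw [hκlen]
    refine le_trans (supp_add_single y i r') ?_
    omega
  have hlnu : (κ (-(x + r • Pi.single i 1))).length ≤ m + 1 := by
    rw [hκlen, hnegu]
    refine le_trans (supp_add_single (-x) i (-r)) ?_
    rw [hsx]; omega
  have hlz : (κ z).length ≤ n := by
    rw [hκlen]
    exact (Finset.card_filter_le _ _).trans (by simp)
  have h1 : (κ (x + r • Pi.single i 1) ++
      (κ (-(x + r • Pi.single i 1)) ++ κ z)).length ≤ n + 2 * m + 2 := by
    simp only [List.length_append]; omega
  have h2 : (κ (y + r' • Pi.single i 1) ++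
      (κ (-(x + r • Pi.single i 1)) ++ κ z)).length ≤ n + 2 * m + 2 := by
    simp only [List.length_append]; omega
  have hA : A (κ (x + r • Pi.single i 1) ++ (κ (-(x + r • Pi.single i 1)) ++ κ z))
      = A (κ (y + r' • Pi.single i 1) ++ (κ (-(x + r • Pi.single i 1)) ++ κ z)) := by
    rw [hg, hg, hcoll]
  have e1 := hcorrect _ h1
  have e2 := hcorrect _ h2
  rw [hA] at e1
  have hf1 : freq (κ (x + r • Pi.single i 1) ++
      (κ (-(x + r • Pi.single i 1)) ++ κ z)) = z := by
    rw [freq_append, freq_append, hκfreq, hκfreq, hκfreq]; abel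
  have hf2 : freq (κ (y + r' • Pi.single i 1) ++
      (κ (-(x + r • Pi.single i 1)) ++ κ z)) =
      z + (y - x) + (r' - r) • Pi.single i 1 := by
    rw [freq_append, freq_append, hκfreq, hκfreq, hκfreq]
    funext j
    simp only [Pi.add_apply, Pi.neg_apply, Pi.sub_apply, Pi.smul_apply, smul_eq_mul]
    ring
  rw [hf1] at e1
  rw [hf2] at e2
  rw [← e1, e2]
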